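/- Let θ_1, ..., θ_n ∈ (0, π/2) satisfy ∑_k cos²θ_k = 1, and set g² = (∏_k sin²θ_k) / (∑_k sin²θ_k(1 - sin²θ_k)). Then g² ≤ 1/2. -/
import Mathlib


open Finset Real

lemma sum_sq_le_sq_sum {ι : Type*} [DecidableEq ι] (s : Finset ι) (x : ι → ℝ)
    (h0 : ∀ i ∈ s, 0 ≤ x i) :
    ∑ i ∈ s, (x i) ^ 2 ≤ (∑ i ∈ s, x i) ^ 2 := by
  induction s using Finset.induction_on with
  | empty => simp
  | @insert a s ha ih =>
    rw [Finset.sum_insert ha, Finset.sum_insert ha]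
    have h0' : ∀ i ∈ s, 0 ≤ x i := fun i hi => h0 i (Finset.mem_insert_of_mem hi)
    have hs : 0 ≤ ∑ i ∈ s, x i := Finset.sum_nonneg h0'
    have ha0 : 0 ≤ x a := h0 a (Finset.mem_insert_self a s)
    nlinarith [ih h0']

lemma prod_one_sub_le {ι : Type*} [DecidableEq ι] (s : Finset ι) (x : ι → ℝ)
    (h0 : ∀ i ∈ s, 0 ≤ x i) (h1 : ∀ i ∈ s, x i ≤ 1) :
    ∏ i ∈ s, (1 - x i) ≤
      1 - ∑ i ∈ s, x i + ((∑ i ∈ s, x i) ^ 2 - ∑ i ∈ s, (x i) ^ 2) / 2 := by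
  induction s using Finset.induction_on with
  | empty => simp
  | @insert a s ha ih =>
    have h0' : ∀ i ∈ s, 0 ≤ x i := fun i hi => h0 i (Finset.mem_insert_of_mem hi)
    have h1' : ∀ i ∈ s, x i ≤ 1 := fun i hi => h1 i (Finset.mem_insert_of_mem hi)
    have hprod : 0 ≤ ∏ i ∈ s, (1 - x i) :=
      Finset.prod_nonneg fun i hi => by linarith [h1' i hi]
    have ihs := ih h0' h1'
    have hQ : 0 ≤ ((∑ i ∈ s, x i) ^ 2 - ∑ i ∈ s, (x i) ^ 2) / 2 := by
      linarith [sum_sq_le_sq_sum s x h0']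
    have ha0 : 0 ≤ x a := h0 a (Finset.mem_insert_self a s)
    have ha1 : x a ≤ 1 := h1 a (Finset.mem_insert_self a s)
    rw [Finset.prod_insert ha, Finset.sum_insert ha, Finset.sum_insert ha]
    have hs : 0 ≤ ∑ i ∈ s, x i := Finset.sum_nonneg h0'
    nlinarith [mul_le_mul_of_nonneg_left ihs (by linarith : (0:ℝ) ≤ 1 - x a)]

theorem g_sq_le_half (n : ℕ) (θ : Fin n → ℝ)
    (hθ : ∀ k, θ k ∈ Set.Ioo (0 : ℝ) (π / 2))
    (hsum : ∑ k, Real.cos (θ k) ^ 2 = 1) :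
    (∏ k, Real.sin (θ k) ^ 2) /
      (∑ k, Real.sin (θ k) ^ 2 * (1 - Real.sin (θ k) ^ 2)) ≤ 1 / 2 := by
  set x : Fin n → ℝ := fun k => Real.cos (θ k) ^ 2 with hx
  have hsin : ∀ k, Real.sin (θ k) ^ 2 = 1 - x k := by
    intro k
    have := Real.sin_sq_add_cos_sq (θ k)
    simp [hx]; linarith
  have hx0 : ∀ k, 0 < x k := by
    intro k
    have h := hθ k
    have hc : 0 < Real.cos (θ k) := Real.cos_pos_of_mem_Ioo
      ⟨by linarith [h.1, Real.pi_pos], h.2⟩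
    positivity
  have hx1 : ∀ k, x k < 1 := by
    intro k
    have h := hθ k
    have hs : 0 < Real.sin (θ k) := Real.sin_pos_of_pos_of_lt_pi h.1
      (by linarith [h.2, Real.pi_pos])
    have := hsin k
    nlinarith
  have hn : 0 < n := by
    rcases Nat.eq_zero_or_pos n with h | h
    · subst h; simp at hsum
    · exact h
  have hD : 0 < ∑ k, Real.sin (θ k) ^ 2 * (1 - Real.sin (θ k) ^ 2) := by
    apply Finset.sum_pos
    · intro k _
      rw [hsin k]
      have := hx0 k; have := hx1 k
      nlinarith
    · exact Finset.univ_nonempty_iff.mpr (Fin.pos_iff_nonempty.mp hn)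
  rw [div_le_div_iff₀ hD two_pos]
  have hD' : (∑ k, Real.sin (θ k) ^ 2 * (1 - Real.sin (θ k) ^ 2))
      = 1 - ∑ k, (x k) ^ 2 := by
    have : ∀ k ∈ Finset.univ, Real.sin (θ k) ^ 2 * (1 - Real.sin (θ k) ^ 2)
        = x k - (x k) ^ 2 := by
      intro k _; rw [hsin k]; ring
    rw [Finset.sum_congr rfl this, Finset.sum_sub_distrib, hsum]
  have hP : (∏ k, Real.sin (θ k) ^ 2) = ∏ k, (1 - x k) :=
    Finset.prod_congr rfl fun k _ => hsin k
  have key := prod_one_sub_le (Finset.univ : Finset (Fin n)) x (fun i _ => (hx0 i).le)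
    (fun i _ => (hx1 i).le)
  rw [hsum] at key
  rw [hP, hD']
  linarith
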